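/- With p, c, d, e, f, g as defined, set 𝒞 = −c² + ce/2 + cf/2 + d² − de/2 − df/2 − 2d − g² + 2p² + 1, 𝒟 = −c − d − 2g + 4p, 𝓔 = −2c² + ce + cf − ef/2 − e/2 − f/2 − g²/2 + 2p², 𝓗 = −2c − g + 4p − 1. Then 𝒞𝓗 − 𝒟𝓔 ≠ 0, so there is a unique pair of reals (K, r) with K𝒞 + r𝒟 = 1 and K𝓔 + r𝓗 = 1, and this pair satisfies K > 0 and r < 0. -/

import Mathlib

set_option maxHeartbeats 1000000 in
/-- With `p` the specified cubic root and the breakpoints and reduced quantities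
`𝒞, 𝒟, 𝓔, 𝓗` as in the odd-fat continuum certificate, the determinant `𝒞𝓗 − 𝒟𝓔` is
nonzero, so a unique pair `(K, r)` solves `K𝒞 + r𝒟 = 1` and `K𝓔 + r𝓗 = 1`, and this
pair satisfies `K > 0` and `r < 0`. -/
theorem certificate_Kr_exists_unique_signs (p c d e f g CC DD EE HH : ℝ)
    (hproot : 401 * p ^ 3 - 331 * p ^ 2 + 19 * p + 7 = 0)
    (hpmem : p ∈ Set.Ioo (2115883 / 10 ^ 7 : ℝ) (2115884 / 10 ^ 7))
    (hc : c = (187 * p ^ 3 - 211 * p ^ 2 + 61 * p - 5) / (2 * (71 * p ^ 2 - 66 * p + 11)))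
    (hd : d = 1 + p - c)
    (he : e = (2 * c + 3 * p - 1) / 4)
    (hf : f = (-2 * c + 5 * p + 1) / 4)
    (hg : g = (1 - 3 * p + 2 * c) / 2)
    (hCC : CC = -c ^ 2 + c * e / 2 + c * f / 2 + d ^ 2 - d * e / 2 - d * f / 2
      - 2 * d - g ^ 2 + 2 * p ^ 2 + 1)
    (hDD : DD = -c - d - 2 * g + 4 * p)
    (hEE : EE = -2 * c ^ 2 + c * e + c * f - e * f / 2 - e / 2 - f / 2
      - g ^ 2 / 2 + 2 * p ^ 2)
    (hHH : HH = -2 * c - g + 4 * p - 1) :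
    CC * HH - DD * EE ≠ 0
    ∧ (∃! Kr : ℝ × ℝ, Kr.1 * CC + Kr.2 * DD = 1 ∧ Kr.1 * EE + Kr.2 * HH = 1)
    ∧ (∀ K r : ℝ, K * CC + r * DD = 1 → K * EE + r * HH = 1 → 0 < K ∧ r < 0) := by
  obtain ⟨hp1, hp2⟩ := hpmem
  have hden : (0:ℝ) < 2 * (71 * p ^ 2 - 66 * p + 11) := by nlinarith
  have hc1 : (5422892 / 10 ^ 7 : ℝ) < c := by
    rw [hc, lt_div_iff₀ hden]
    nlinarith [sq_nonneg (p - 2115883/10^7), mul_pos (sub_pos.2 hp1) (sub_pos.2 hp1)]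
  have hc2 : c < (5422977 / 10 ^ 7 : ℝ) := by
    rw [hc, div_lt_iff₀ hden]
    nlinarith [sq_nonneg (p - 2115883/10^7), mul_pos (sub_pos.2 hp1) (sub_pos.2 hp1)]
  clear hproot hc hden
  subst hd he hf hg
  have hCC1 : (-64756 / 10 ^ 5 : ℝ) < CC := by
    rw [hCC]
    nlinarith [sq_nonneg (c - 5422892/10^7), sq_nonneg (p - 2115883/10^7), mul_pos (sub_pos.2 hp1) (sub_pos.2 hc1)]
  have hCC2 : CC < (-64753 / 10 ^ 5 : ℝ) := by
    rw [hCC]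
    nlinarith [sq_nonneg (c - 5422892/10^7), sq_nonneg (p - 2115883/10^7), mul_pos (sub_pos.2 hp1) (sub_pos.2 hc1)]
  have hDD1 : (-18151 / 10 ^ 4 : ℝ) < DD := by rw [hDD]; nlinarith
  have hDD2 : DD < (-18150 / 10 ^ 4 : ℝ) := by rw [hDD]; nlinarith
  have hEE1 : (-76537 / 10 ^ 5 : ℝ) < EE := by
    rw [hEE]
    nlinarith [sq_nonneg (c - 5422892/10^7), sq_nonneg (p - 2115883/10^7), mul_pos (sub_pos.2 hp1) (sub_pos.2 hc1)]
  have hEE2 : EE < (-76534 / 10 ^ 5 : ℝ) := by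
    rw [hEE]
    nlinarith [sq_nonneg (c - 5422892/10^7), sq_nonneg (p - 2115883/10^7), mul_pos (sub_pos.2 hp1) (sub_pos.2 hc1)]
  have hHH1 : (-19632 / 10 ^ 4 : ℝ) < HH := by rw [hHH]; nlinarith
  have hHH2 : HH < (-19631 / 10 ^ 4 : ℝ) := by rw [hHH]; nlinarith
  clear hCC hDD hEE hHH hp1 hp2 hc1 hc2
  have hdet : CC * HH - DD * EE < 0 := by
    have hCCneg : CC < 0 := by linarith
    have hHHneg : HH < 0 := by linarith
    nlinarith [mul_pos (neg_pos.2 hCCneg) (neg_pos.2 hHHneg)]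
  have hdetne : CC * HH - DD * EE ≠ 0 := ne_of_lt hdet
  have hHD : HH - DD < 0 := by linarith
  have hCE : 0 < CC - EE := by linarith
  have signs : ∀ K r : ℝ, K * CC + r * DD = 1 → K * EE + r * HH = 1 → 0 < K ∧ r < 0 := by
    intro K r h1 h2
    have hK : K * (CC * HH - DD * EE) = HH - DD := by linear_combination HH * h1 - DD * h2
    have hr : r * (CC * HH - DD * EE) = CC - EE := by linear_combination -EE * h1 + CC * h2
    constructor
    · nlinarith
    · nlinarith
  refine ⟨hdetne, ⟨((HH - DD) / (CC * HH - DD * EE), (CC - EE) / (CC * HH - DD * EE)), ⟨?_, ?_⟩, ?_⟩, signs⟩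
  · rw [div_mul_eq_mul_div, div_mul_eq_mul_div, ← add_div, div_eq_one_iff_eq hdetne]; ring
  · rw [div_mul_eq_mul_div, div_mul_eq_mul_div, ← add_div, div_eq_one_iff_eq hdetne]; ring
  · rintro ⟨K, r⟩ ⟨h1, h2⟩
    have hK : K * (CC * HH - DD * EE) = HH - DD := by linear_combination HH * h1 - DD * h2
    have hr : r * (CC * HH - DD * EE) = CC - EE := by linear_combination -EE * h1 + CC * h2
    have e1 : K = (HH - DD) / (CC * HH - DD * EE) := by
      rw [eq_div_iff hdetne]; exact hK
    have e2 : r = (CC - EE) / (CC * HH - DD * EE) := by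
      rw [eq_div_iff hdetne]; exact hr
    simp [e1, e2]
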